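/- For every n ≥ 3 and every k with 0 ≤ k ≤ n−3, f_n(k, n−1) = 2^{n−3−k}. (This is the coefficient form of the generating function identity ∑_{n≥1} ∑_{k=0}^{n−1} f_n(k, n−1) x^k q^n = q(1−q)² / ((1−2q)(1−xq)).) -/

import Mathlib

/-- `e : Fin n → ℕ` is an inversion sequence: `e i ≤ i` (0-indexed). -/
def IsInvSeq {n : ℕ} (e : Fin n → ℕ) : Prop := ∀ i : Fin n, e i ≤ (i : ℕ)

/-- `e` avoids the pattern 0012: there are no indices `i < j < k < l`
with `e i = e j < e k < e l`. -/
def Avoids0012 {n : ℕ} (e : Fin n → ℕ) : Prop :=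
  ¬ ∃ i j k l : Fin n, i < j ∧ j < k ∧ k < l ∧ e i = e j ∧ e j < e k ∧ e k < e l

/-- The set `I_n(0012)` of inversion sequences of length `n` avoiding `0012`. -/
def InvSeq0012 (n : ℕ) : Set (Fin n → ℕ) := {e | IsInvSeq e ∧ Avoids0012 e}

/-- `R(e)`: the set of values appearing more than once in `e`. -/
def repeats {n : ℕ} (e : Fin n → ℕ) : Set ℕ :=
  {m | ∃ i j : Fin n, i ≠ j ∧ e i = m ∧ e j = m}

open Classical in
/-- `srpt e = min R(e)` if `R(e) ≠ ∅`, and `n - 1` otherwise. -/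
noncomputable def srpt {n : ℕ} (e : Fin n → ℕ) : ℕ :=
  if (repeats e).Nonempty then sInf (repeats e) else n - 1

/-- The last entry of `e` (and `0` for the empty sequence). -/
def lastEntry {n : ℕ} (e : Fin n → ℕ) : ℕ :=
  if h : 0 < n then e ⟨n - 1, by omega⟩ else 0

/-- `γ(e)`: the sequence `e` with its last entry removed. -/
def gammaSeq {n : ℕ} (e : Fin n → ℕ) : Fin (n - 1) → ℕ :=
  fun i => e (Fin.castLE (Nat.sub_le n 1) i)

/-- `f n k ℓ`: the number of `e ∈ I_n(0012)` with `srpt e = k` and `last e = ℓ`. -/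
noncomputable def f (n k ℓ : ℕ) : ℕ :=
  Set.ncard {e : Fin n → ℕ | e ∈ InvSeq0012 n ∧ srpt e = k ∧ lastEntry e = ℓ}

namespace Stmt14Aux

/-- Antitone sequences of length `p` with values `≤ q`. -/
def A (p q : ℕ) : Set (Fin p → ℕ) :=
  {f | (∀ i j : Fin p, i ≤ j → f j ≤ f i) ∧ ∀ i, f i ≤ q}

lemma A_finite (p q : ℕ) : (A p q).Finite := by
  have h : A p q ⊆ Set.pi Set.univ (fun _ : Fin p => Set.Iic q) := by
    intro f hf i _
    exact hf.2 i
  exact (Set.Finite.pi (fun _ => Set.finite_Iic q)).subset h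

/-- append 0 at the end -/
def sn (p : ℕ) (f : Fin p → ℕ) : Fin (p+1) → ℕ :=
  fun i => if h : (i : ℕ) < p then f ⟨i, h⟩ else 0

/-- add 1 everywhere -/
def sc (p : ℕ) (f : Fin p → ℕ) : Fin p → ℕ := fun i => f i + 1

lemma sn_inj (p : ℕ) : Function.Injective (sn p) := by
  intro f g h
  funext j
  have := congrFun h ⟨j, by omega⟩
  simpa [sn, j.isLt] using this

lemma sc_inj (p : ℕ) : Function.Injective (sc p) := by
  intro f g h
  funext j
  have := congrFun h j
  simpa [sc] using this

lemma A_split (p q : ℕ) :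
    A (p+1) (q+1) = sn p '' A p (q+1) ∪ sc (p+1) '' A (p+1) q := by
  ext f
  constructor
  · rintro ⟨hant, hbd⟩
    by_cases h0 : f ⟨p, by omega⟩ = 0
    · left
      refine ⟨fun j => f ⟨j, by omega⟩, ⟨?_, ?_⟩, ?_⟩
      · intro i j hij
        exact hant ⟨i, by omega⟩ ⟨j, by omega⟩ (Fin.mk_le_mk.mpr (Fin.le_def.mp hij))
      · intro i; exact hbd _
      · funext i
        by_cases hi : (i : ℕ) < p
        · simp only [sn, dif_pos hi]
        · have hieq : (i : ℕ) = p := by omega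
          simp only [sn, dif_neg hi]
          exact ((congrArg f (Fin.ext hieq : i = ⟨p, by omega⟩)).trans h0).symm
    · right
      have h1 : ∀ i : Fin (p+1), 1 ≤ f i := by
        intro i
        have := hant i ⟨p, by omega⟩ (Fin.le_def.mpr (by simpa using by omega))
        omega
      refine ⟨fun i => f i - 1, ⟨?_, ?_⟩, ?_⟩
      · intro i j hij
        show f j - 1 ≤ f i - 1
        have := hant i j hij
        omega
      · intro i
        show f i - 1 ≤ q
        have := hbd i
        omega
      · funext i
        show f i - 1 + 1 = f i
        have := h1 i
        omega
  · rintro (⟨g, ⟨hant, hbd⟩, rfl⟩ | ⟨g, ⟨hant, hbd⟩, rfl⟩)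
    · refine ⟨?_, ?_⟩
      · intro i j hij
        by_cases hj : (j : ℕ) < p
        · have hi : (i : ℕ) < p := by
            have := (Fin.le_def.mp hij); omega
          simp only [sn, dif_pos hi, dif_pos hj]
          exact hant _ _ (Fin.mk_le_mk.mpr (Fin.le_def.mp hij))
        · simp only [sn, dif_neg hj]
          omega
      · intro i
        by_cases hi : (i : ℕ) < p
        · simp only [sn, dif_pos hi]
          exact hbd _
        · simp only [sn, dif_neg hi]
          omega
    · refine ⟨?_, ?_⟩
      · intro i j hij
        show g j + 1 ≤ g i + 1
        have := hant i j hij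
        omega
      · intro i
        show g i + 1 ≤ q + 1
        have := hbd i
        omega

lemma A_disj (p q : ℕ) : Disjoint (sn p '' A p (q+1)) (sc (p+1) '' A (p+1) q) := by
  rw [Set.disjoint_left]
  rintro f ⟨g, _, rfl⟩ ⟨g', _, hg'⟩
  have := congrFun hg' ⟨p, by omega⟩
  simp [sn, sc] at this

lemma A_card : ∀ p q : ℕ, (A p q).ncard = (p+q).choose p := by
  have key : ∀ N p q : ℕ, p + q ≤ N → (A p q).ncard = (p+q).choose p := by
    intro N
    induction N with
    | zero =>
      intro p q h
      have hp : p = 0 := by omega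
      have hq : q = 0 := by omega
      subst hp; subst hq
      have huniv : A 0 0 = Set.univ := by
        ext f
        simp only [A, Set.mem_setOf_eq, Set.mem_univ, iff_true]
        exact ⟨fun i => i.elim0, fun i => i.elim0⟩
      rw [huniv, Set.ncard_univ, Nat.card_unique, Nat.choose_zero_right]
    | succ N ih =>
      intro p q h
      match p, q with
      | 0, q =>
        have huniv : A 0 q = Set.univ := by
          ext f
          simp only [A, Set.mem_setOf_eq, Set.mem_univ, iff_true]
          exact ⟨fun i => i.elim0, fun i => i.elim0⟩
        rw [huniv, Set.ncard_univ, Nat.card_unique, Nat.choose_zero_right]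
      | p+1, 0 =>
        have hsing : A (p+1) 0 = {fun _ => 0} := by
          ext f
          simp only [A, Set.mem_setOf_eq, Set.mem_singleton_iff]
          constructor
          · rintro ⟨-, hbd⟩
            funext i
            have := hbd i; omega
          · rintro rfl
            exact ⟨fun _ _ _ => le_rfl, fun _ => le_rfl⟩
        rw [hsing, Set.ncard_singleton, Nat.add_zero, Nat.choose_self]
      | p+1, q+1 =>
        rw [A_split p q, Set.ncard_union_eq (A_disj p q)
            ((A_finite _ _).image _) ((A_finite _ _).image _),
          Set.ncard_image_of_injective _ (sn_inj p),
          Set.ncard_image_of_injective _ (sc_inj (p+1)),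
          ih p (q+1) (by omega), ih (p+1) q (by omega)]
        have harr : p + 1 + (q + 1) = (p + (q+1)) + 1 := by omega
        rw [harr, Nat.choose_succ_succ (p + (q+1)) p]
        congr 2
        omega
  intro p q
  exact key (p+q) p q le_rfl


def Sm (n k m : ℕ) : Set (Fin n → ℕ) :=
  {e | (∀ i : Fin n, (i : ℕ) ≤ m → e i = i)
     ∧ (∀ i j : Fin n, m ≤ (i : ℕ) → (i : ℕ) ≤ (j : ℕ) → (j : ℕ) ≤ n - 2 → e j ≤ e i)
     ∧ (∀ i : Fin n, (i : ℕ) = n - 2 → e i = k)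
     ∧ (∀ i : Fin n, (i : ℕ) = n - 1 → e i = n - 1)}

def ext (n k m : ℕ) (f : Fin (n - 3 - m) → ℕ) : Fin n → ℕ := fun i =>
  if _ : (i : ℕ) ≤ m then (i : ℕ)
  else if _ : (i : ℕ) = n - 1 then n - 1
  else if _ : (i : ℕ) = n - 2 then k
  else k + f ⟨(i : ℕ) - (m + 1), by omega⟩

lemma ext_low (n k m : ℕ) (f : Fin (n - 3 - m) → ℕ) (i : Fin n) (h : (i : ℕ) ≤ m) :
    ext n k m f i = (i : ℕ) := by simp only [ext, dif_pos h]

lemma ext_last (n k m : ℕ) (f : Fin (n - 3 - m) → ℕ) (i : Fin n)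
    (h1 : ¬ (i : ℕ) ≤ m) (h2 : (i : ℕ) = n - 1) :
    ext n k m f i = n - 1 := by simp only [ext, dif_neg h1, dif_pos h2]

lemma ext_pen (n k m : ℕ) (f : Fin (n - 3 - m) → ℕ) (i : Fin n)
    (h1 : ¬ (i : ℕ) ≤ m) (h2 : ¬ (i : ℕ) = n - 1) (h3 : (i : ℕ) = n - 2) :
    ext n k m f i = k := by simp only [ext, dif_neg h1, dif_neg h2, dif_pos h3]

lemma ext_mid (n k m : ℕ) (f : Fin (n - 3 - m) → ℕ) (i : Fin n)
    (h1 : ¬ (i : ℕ) ≤ m) (h2 : ¬ (i : ℕ) = n - 1) (h3 : ¬ (i : ℕ) = n - 2)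
    (hb : (i : ℕ) - (m + 1) < n - 3 - m) :
    ext n k m f i = k + f ⟨(i : ℕ) - (m + 1), hb⟩ := by
  simp only [ext, dif_neg h1, dif_neg h2, dif_neg h3]

lemma ext_inj (n k m : ℕ) (hm : m ≤ n - 3) (hn : 3 ≤ n) :
    Function.Injective (ext n k m) := by
  intro f g h
  funext j
  have hj := j.isLt
  have hpos : m + 1 + (j : ℕ) < n := by omega
  set i : Fin n := ⟨m + 1 + (j : ℕ), hpos⟩ with hi
  have hv : (i : ℕ) = m + 1 + (j : ℕ) := rfl
  have h1 : ¬ ((i : ℕ) ≤ m) := by omega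
  have h2 : ¬ ((i : ℕ) = n - 1) := by omega
  have h3 : ¬ ((i : ℕ) = n - 2) := by omega
  have hb : (i : ℕ) - (m + 1) < n - 3 - m := by omega
  have hfj : (⟨(i : ℕ) - (m + 1), hb⟩ : Fin (n - 3 - m)) = j :=
    Fin.ext (show (i : ℕ) - (m + 1) = (j : ℕ) by omega)
  have := (ext_mid n k m f i h1 h2 h3 hb).symm.trans
    ((congrFun h i).trans (ext_mid n k m g i h1 h2 h3 hb))
  rw [hfj] at this
  omega

lemma Sm_sub (n k m : ℕ) (hn : 3 ≤ n) (hkm : k ≤ m) (hm : m ≤ n - 3) :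
    Sm n k m ⊆ ext n k m '' A (n - 3 - m) (m - k) := by
  rintro e ⟨hst, hant, hn2, hn1⟩
  have hfloor : ∀ j : Fin n, m ≤ (j : ℕ) → (j : ℕ) ≤ n - 2 → k ≤ e j := by
    intro j hmj hjn
    have hlt : n - 2 < n := by omega
    have := hant j ⟨n - 2, hlt⟩ hmj (show (j:ℕ) ≤ n - 2 from hjn) (le_rfl)
    rw [hn2 ⟨n - 2, hlt⟩ rfl] at this
    exact this
  have hcap : ∀ j : Fin n, m ≤ (j : ℕ) → (j : ℕ) ≤ n - 2 → e j ≤ m := by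
    intro j hmj hjn
    have hmpos : m < n := by omega
    have := hant ⟨m, hmpos⟩ j (le_rfl) (show m ≤ (j:ℕ) from hmj) hjn
    rwa [hst ⟨m, hmpos⟩ (le_rfl)] at this
  refine ⟨fun j => e ⟨m + 1 + (j : ℕ), by omega⟩ - k, ⟨?_, ?_⟩, ?_⟩
  · intro i j hij
    show e ⟨m + 1 + (j : ℕ), by omega⟩ - k ≤ e ⟨m + 1 + (i : ℕ), by omega⟩ - k
    have hle : (i : ℕ) ≤ (j : ℕ) := Fin.le_def.mp hij
    have hi := i.isLt; have hj := j.isLt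
    have := hant ⟨m + 1 + (i : ℕ), by omega⟩ ⟨m + 1 + (j : ℕ), by omega⟩
      (show m ≤ m + 1 + (i:ℕ) by omega) (show m + 1 + (i:ℕ) ≤ m + 1 + (j:ℕ) by omega)
      (show m + 1 + (j:ℕ) ≤ n - 2 by omega)
    omega
  · intro i
    show e ⟨m + 1 + (i : ℕ), by omega⟩ - k ≤ m - k
    have hi := i.isLt
    have := hcap ⟨m + 1 + (i : ℕ), by omega⟩ (show m ≤ m + 1 + (i:ℕ) by omega)
      (show m + 1 + (i:ℕ) ≤ n - 2 by omega)
    omega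
  · funext i
    by_cases h1 : (i : ℕ) ≤ m
    · rw [ext_low n k m _ i h1]
      exact (hst i h1).symm
    · by_cases h2 : (i : ℕ) = n - 1
      · rw [ext_last n k m _ i h1 h2]
        exact (hn1 i h2).symm
      · by_cases h3 : (i : ℕ) = n - 2
        · rw [ext_pen n k m _ i h1 h2 h3]
          exact (hn2 i h3).symm
        · have hi := i.isLt
          have hb : (i : ℕ) - (m + 1) < n - 3 - m := by omega
          rw [ext_mid n k m _ i h1 h2 h3 hb]
          have hpf : m + 1 + ((i : ℕ) - (m + 1)) < n := by omega
          show k + (e ⟨m + 1 + ((i : ℕ) - (m + 1)), hpf⟩ - k) = e i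
          have h5 : e (⟨m + 1 + ((i : ℕ) - (m + 1)), hpf⟩ : Fin n) = e i :=
            congrArg e (Fin.ext (show m + 1 + ((i : ℕ) - (m + 1)) = (i : ℕ) by omega))
          rw [h5]
          have := hfloor i (by omega) (by omega)
          omega

lemma image_sub_Sm (n k m : ℕ) (hn : 3 ≤ n) (hkm : k ≤ m) (hm : m ≤ n - 3) :
    ext n k m '' A (n - 3 - m) (m - k) ⊆ Sm n k m := by
  rintro _ ⟨f, ⟨hant, hbd⟩, rfl⟩
  have hval : ∀ l : Fin n, m ≤ (l : ℕ) → (l : ℕ) ≤ n - 2 →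
      k ≤ ext n k m f l ∧ ext n k m f l ≤ m := by
    intro l hml hln
    by_cases h1 : (l : ℕ) ≤ m
    · rw [ext_low n k m f l h1]
      omega
    · have h2 : ¬ ((l : ℕ) = n - 1) := by omega
      by_cases h3 : (l : ℕ) = n - 2
      · rw [ext_pen n k m f l h1 h2 h3]
        omega
      · have hb : (l : ℕ) - (m + 1) < n - 3 - m := by omega
        rw [ext_mid n k m f l h1 h2 h3 hb]
        have := hbd ⟨(l : ℕ) - (m + 1), hb⟩
        omega
  refine ⟨?_, ?_, ?_, ?_⟩
  · intro i hi
    exact ext_low n k m f i hi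
  · intro i j hmi hij hjn
    by_cases hii : (i : ℕ) ≤ m
    · have hieq : (i : ℕ) = m := by omega
      rw [ext_low n k m f i hii, hieq]
      exact (hval j (by omega) hjn).2
    · by_cases hj3 : (j : ℕ) = n - 2
      · have hj2 : ¬ ((j : ℕ) = n - 1) := by omega
        rw [ext_pen n k m f j (by omega) hj2 hj3]
        exact (hval i hmi (by omega)).1
      · by_cases hi3 : (i : ℕ) = n - 2
        · have hjeq : (j : ℕ) = n - 2 := by omega
          exact absurd hjeq hj3
        · have hi2 : ¬ ((i : ℕ) = n - 1) := by omega
          have hj2 : ¬ ((j : ℕ) = n - 1) := by omega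
          have hbi : (i : ℕ) - (m + 1) < n - 3 - m := by omega
          have hbj : (j : ℕ) - (m + 1) < n - 3 - m := by omega
          rw [ext_mid n k m f i hii hi2 hi3 hbi, ext_mid n k m f j (by omega) hj2 hj3 hbj]
          have := hant ⟨(i : ℕ) - (m + 1), hbi⟩ ⟨(j : ℕ) - (m + 1), hbj⟩
            (Fin.mk_le_mk.mpr (by omega))
          omega
  · intro i hi
    exact ext_pen n k m f i (by omega) (by omega) hi
  · intro i hi
    exact ext_last n k m f i (by omega) hi

lemma Sm_eq_image (n k m : ℕ) (hn : 3 ≤ n) (hkm : k ≤ m) (hm : m ≤ n - 3) :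
    Sm n k m = ext n k m '' A (n - 3 - m) (m - k) :=
  le_antisymm (Sm_sub n k m hn hkm hm) (image_sub_Sm n k m hn hkm hm)


lemma Sm_sub_TS (n k m : ℕ) (hn : 3 ≤ n) (hkm : k ≤ m) (hm : m ≤ n - 3) :
    Sm n k m ⊆ {e : Fin n → ℕ | e ∈ InvSeq0012 n ∧ srpt e = k ∧ lastEntry e = n - 1} := by
  rintro e ⟨hst, hant, hn2, hn1⟩
  have hinv : IsInvSeq e := by
    intro i
    by_cases h1 : (i : ℕ) ≤ m
    · rw [hst i h1]
    · by_cases h2 : (i : ℕ) = n - 1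
      · rw [hn1 i h2]; omega
      · have hi := i.isLt
        have hmlt : m < n := by omega
        have h5 := hant ⟨m, hmlt⟩ i le_rfl (show m ≤ (i : ℕ) by omega)
          (show (i : ℕ) ≤ n - 2 by omega)
        have h6 : e ⟨m, hmlt⟩ = m := hst _ le_rfl
        omega
  have hlow : ∀ j : Fin n, m ≤ (j : ℕ) → (j : ℕ) ≤ n - 2 → k ≤ e j := by
    intro j hmj hjn
    have hlt : n - 2 < n := by omega
    have := hant j ⟨n - 2, hlt⟩ hmj hjn (le_rfl)
    rw [hn2 ⟨n - 2, hlt⟩ rfl] at this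
    exact this
  refine ⟨⟨hinv, ?_⟩, ?_, ?_⟩
  · rintro ⟨i, j, p, l, hij, hjp, hpl, heij, hejp, hepl⟩
    have hij' : (i : ℕ) < (j : ℕ) := hij
    have hjp' : (j : ℕ) < (p : ℕ) := hjp
    have hpl' : (p : ℕ) < (l : ℕ) := hpl
    have hl := l.isLt
    have hjm : ¬ ((j : ℕ) ≤ m) := by
      intro hjm
      rw [hst i (by omega), hst j hjm] at heij
      omega
    have := hant j p (by omega) (by omega) (by omega)
    omega
  · have hkrep : k ∈ repeats e := by
      refine ⟨⟨k, by omega⟩, ⟨n - 2, by omega⟩, Fin.ne_of_val_ne (by simp; omega), ?_, ?_⟩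
      · rw [hst ⟨k, by omega⟩ (by simpa using hkm)]
      · exact hn2 ⟨n - 2, by omega⟩ rfl
    have hne : (repeats e).Nonempty := ⟨k, hkrep⟩
    have hlb : ∀ v ∈ repeats e, k ≤ v := by
      rintro v ⟨i, j, hij, hvi, hvj⟩
      have haux : ∀ i j : Fin n, (i : ℕ) < (j : ℕ) → e i = e j → e i = v → k ≤ v := by
        intro i j hlt hiej hiv
        by_cases hjm : (j : ℕ) ≤ m
        · rw [hst i (by omega), hst j hjm] at hiej
          omega
        · by_cases hj1 : (j : ℕ) = n - 1
          · have := hinv i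
            rw [hiej, hn1 j hj1] at hiv
            omega
          · have hj := j.isLt
            have := hlow j (by omega) (by omega)
            omega
      have hne' : (i : ℕ) ≠ (j : ℕ) := fun hc => hij (Fin.ext hc)
      rcases Nat.lt_or_ge (i : ℕ) (j : ℕ) with h | h
      · exact haux i j h (hvi.trans hvj.symm) hvi
      · exact haux j i (by omega) (hvj.trans hvi.symm) hvj
    rw [srpt, if_pos hne]
    exact le_antisymm (Nat.sInf_le hkrep) (le_csInf hne hlb)
  · rw [lastEntry, dif_pos (show 0 < n by omega)]
    exact hn1 _ rfl


lemma TS_sub_union (n k : ℕ) (hn : 3 ≤ n) (hk : k + 3 ≤ n) :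
    {e : Fin n → ℕ | e ∈ InvSeq0012 n ∧ srpt e = k ∧ lastEntry e = n - 1} ⊆
      ⋃ m ∈ Finset.Icc k (n - 3), Sm n k m := by
  classical
  rintro e ⟨⟨hinv, havd⟩, hsr, hlast⟩
  rw [lastEntry, dif_pos (show 0 < n by omega)] at hlast
  -- repeats is nonempty and has infimum k
  have hne : (repeats e).Nonempty := by
    by_contra hc
    rw [srpt, if_neg (by simpa using hc)] at hsr
    omega
  have hks : sInf (repeats e) = k := by rwa [srpt, if_pos hne] at hsr
  have hkrep : k ∈ repeats e := hks ▸ Nat.sInf_mem hne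
  have hlb : ∀ v ∈ repeats e, k ≤ v := fun v hv => hks ▸ Nat.sInf_le hv
  -- staircase up to k
  have stair : ∀ c : ℕ, ∀ i : Fin n, (i : ℕ) = c → (i : ℕ) ≤ k → e i = (i : ℕ) := by
    intro c
    induction c using Nat.strong_induction_on with
    | _ c ih =>
      intro i hic hik
      by_contra hcon
      have hlt : e i < (i : ℕ) := lt_of_le_of_ne (hinv i) hcon
      have hvn : e i < n := by have := i.isLt; omega
      have hev : e ⟨e i, hvn⟩ = e i := ih (e i) (by omega) ⟨e i, hvn⟩ rfl (by
        show e i ≤ k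
        omega)
      have hrep : e i ∈ repeats e := ⟨⟨e i, hvn⟩, i, Fin.ne_of_val_ne (by
          show e i ≠ (i : ℕ); omega), hev, rfl⟩
      have := hlb _ hrep
      omega
  -- 001-avoidance in the prefix
  have avoid001 : ∀ i j p : Fin n, (i : ℕ) < (j : ℕ) → (j : ℕ) < (p : ℕ) →
      (p : ℕ) ≤ n - 2 → e i = e j → e p ≤ e j := by
    intro i j p hij hjp hpn heij
    by_contra hcon
    refine havd ⟨i, j, p, ⟨n - 1, by omega⟩, hij, hjp, ?_, heij, by omega, ?_⟩
    · show (p : ℕ) < n - 1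
      omega
    · have h1 : e ⟨n - 1, by omega⟩ = n - 1 := hlast
      have h2 := hinv p
      omega
  -- floor k on positions ≥ k
  have floor : ∀ p : Fin n, k ≤ (p : ℕ) → (p : ℕ) ≤ n - 2 → k ≤ e p := by
    intro p hkp hpn
    by_contra hcon
    push_neg at hcon
    by_cases hpk : (p : ℕ) ≤ k
    · have : e p = (p : ℕ) := stair (p : ℕ) p rfl hpk
      omega
    · have hvn : e p < n := by omega
      have hev : e ⟨e p, hvn⟩ = e p := stair (e p) ⟨e p, hvn⟩ rfl (by
        show e p ≤ k; omega)
      have hrep : e p ∈ repeats e := ⟨⟨e p, hvn⟩, p, Fin.ne_of_val_ne (by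
          show e p ≠ (p : ℕ); omega), hev, rfl⟩
      have := hlb _ hrep
      omega
  have hn2lt : n - 2 < n := by omega
  -- ordered pair of positions with value k
  obtain ⟨i0, j0, hne0, hi0, hj0⟩ := hkrep
  have hvne : (i0 : ℕ) ≠ (j0 : ℕ) := fun hc => hne0 (Fin.ext hc)
  obtain ⟨i0, j0, hlt0, hi0, hj0⟩ :
      ∃ i0 j0 : Fin n, (i0 : ℕ) < (j0 : ℕ) ∧ e i0 = k ∧ e j0 = k := by
    rcases Nat.lt_or_ge (i0 : ℕ) (j0 : ℕ) with h | h
    · exact ⟨i0, j0, h, hi0, hj0⟩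
    · exact ⟨j0, i0, by omega, hj0, hi0⟩
  have hj0n : (j0 : ℕ) ≤ n - 2 := by
    by_contra hc
    have hj1 : (j0 : ℕ) = n - 1 := by have := j0.isLt; omega
    have : e j0 = n - 1 := by
      have : j0 = ⟨n - 1, by omega⟩ := Fin.ext hj1
      rw [this]; exact hlast
    omega
  -- penultimate entry is k
  have hpen : e ⟨n - 2, hn2lt⟩ = k := by
    by_cases hc : (j0 : ℕ) = n - 2
    · have : j0 = ⟨n - 2, hn2lt⟩ := Fin.ext hc
      rwa [this] at hj0
    · have h1 := avoid001 i0 j0 ⟨n - 2, hn2lt⟩ hlt0 (by show (j0:ℕ) < n - 2; omega)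
        (le_rfl) (hi0.trans hj0.symm)
      have h2 := floor ⟨n - 2, hn2lt⟩ (by show k ≤ n - 2; omega) le_rfl
      omega
  -- the peak m
  have hPk : ∀ i : Fin n, (i : ℕ) ≤ k → e i = (i : ℕ) := fun i hi => stair (i : ℕ) i rfl hi
  obtain ⟨m, hkm, hm3, hPm, hgr⟩ :
      ∃ m, k ≤ m ∧ m ≤ n - 3 ∧ (∀ i : Fin n, (i : ℕ) ≤ m → e i = (i : ℕ)) ∧
        (m < n - 3 → ¬ ∀ i : Fin n, (i : ℕ) ≤ m + 1 → e i = (i : ℕ)) := by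
    classical
    set P : ℕ → Prop := fun c => ∀ i : Fin n, (i : ℕ) ≤ c → e i = (i : ℕ) with hPdef
    refine ⟨Nat.findGreatest P (n - 3), ?_, ?_, ?_, ?_⟩
    · exact Nat.le_findGreatest (P := P) (n := n - 3) (by omega) hPk
    · exact Nat.findGreatest_le _
    · exact Nat.findGreatest_spec (P := P) (n := n - 3) (m := k) (by omega) hPk
    · intro hlt
      exact Nat.findGreatest_is_greatest (P := P) (n := n - 3)
        (k := Nat.findGreatest P (n - 3) + 1) (Nat.lt_succ_self _) (by omega)
  -- first step down
  have step8 : m < n - 3 → e ⟨m + 1, by omega⟩ ≤ m := by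
    intro hmlt
    have hnp := hgr hmlt
    push_neg at hnp
    obtain ⟨i, hile, hine⟩ := hnp
    have hieq : (i : ℕ) = m + 1 := by
      by_contra hc
      exact hine (hPm i (by omega))
    have : e i ≤ m := by
      have := hinv i
      omega
    have hieq2 : (⟨m + 1, by omega⟩ : Fin n) = i := Fin.ext hieq.symm
    rwa [hieq2]
  -- main induction: antitone after the peak
  have key : ∀ c : ℕ, ∀ j : Fin n, (j : ℕ) = m + 1 + c → (j : ℕ) ≤ n - 2 →
      e j ≤ m ∧ ∀ i : Fin n, m ≤ (i : ℕ) → (i : ℕ) ≤ (j : ℕ) → e j ≤ e i := by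
    intro c
    induction c with
    | zero =>
      intro j hjv hjn
      have hejm : e j ≤ m := by
        by_cases hmlt : m < n - 3
        · have := step8 hmlt
          have hj : j = ⟨m + 1, by omega⟩ := Fin.ext (show (j : ℕ) = m + 1 by omega)
          rwa [hj]
        · have hmeq : m = n - 3 := by omega
          have hj : j = ⟨n - 2, hn2lt⟩ := Fin.ext (show (j : ℕ) = n - 2 by omega)
          rw [hj, hpen]
          omega
      refine ⟨hejm, fun i hmi hij => ?_⟩
      by_cases hc : (i : ℕ) = (j : ℕ)
      · rw [Fin.ext hc]
      · have hieq : (i : ℕ) = m := by omega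
        rw [hPm i (by omega), hieq]
        exact hejm
    | succ c ih =>
      intro j hjv hjn
      have hjpv : m + 1 + c < n := by omega
      set jp : Fin n := ⟨m + 1 + c, hjpv⟩ with hjp
      obtain ⟨hjp1, hjp2⟩ := ih jp rfl (by show m + 1 + c ≤ n - 2; omega)
      have hvlt : e jp < n := by omega
      have hpv : e ⟨e jp, hvlt⟩ = e jp := hPm _ (by show e jp ≤ m; exact hjp1)
      have hstep : e j ≤ e jp := by
        refine avoid001 ⟨e jp, hvlt⟩ jp j (by show e jp < m + 1 + c; omega)
          (by show m + 1 + c < (j : ℕ); omega) hjn hpv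
      refine ⟨hstep.trans hjp1, fun i hmi hij => ?_⟩
      by_cases hc2 : (i : ℕ) = (j : ℕ)
      · rw [Fin.ext hc2]
      · exact hstep.trans (hjp2 i hmi (by show (i : ℕ) ≤ m + 1 + c; omega))
  -- assemble
  refine Set.mem_biUnion (show m ∈ Finset.Icc k (n - 3) by
    simp only [Finset.mem_Icc]; exact ⟨hkm, hm3⟩) ?_
  refine ⟨fun i hi => hPm i hi, ?_, ?_, ?_⟩
  · intro i j hmi hij hjn
    by_cases hjm : (j : ℕ) ≤ m
    · have : (i : ℕ) = (j : ℕ) := by omega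
      rw [Fin.ext this]
    · exact (key ((j : ℕ) - (m + 1)) j (by omega) hjn).2 i hmi hij
  · intro i hi
    have : i = ⟨n - 2, hn2lt⟩ := Fin.ext hi
    rw [this]; exact hpen
  · intro i hi
    have : i = ⟨n - 1, by omega⟩ := Fin.ext hi
    rw [this]; exact hlast


lemma Sm_disjoint (n k m m' : ℕ) (hn : 3 ≤ n) (hm : m ≤ n - 3) (hmm : m < m') :
    Disjoint (Sm n k m) (Sm n k m') := by
  rw [Set.disjoint_left]
  rintro e ⟨hst, hant, _, _⟩ ⟨hst', _, _, _⟩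
  have hlt : m + 1 < n := by omega
  have h1 : e ⟨m + 1, hlt⟩ = m + 1 := hst' ⟨m + 1, hlt⟩ (by show m + 1 ≤ m'; omega)
  have hlt2 : m < n := by omega
  have h2 := hant ⟨m, hlt2⟩ ⟨m + 1, hlt⟩ le_rfl (by show m ≤ m + 1; omega)
    (by show m + 1 ≤ n - 2; omega)
  have h3 : e ⟨m, hlt2⟩ = m := hst _ le_rfl
  omega

lemma ncard_biUnion {α β : Type*} (s : Finset β) (S : β → Set α)
    (hfin : ∀ b ∈ s, (S b).Finite)
    (hdisj : ∀ b ∈ s, ∀ c ∈ s, b ≠ c → Disjoint (S b) (S c)) :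
    (⋃ b ∈ s, S b).ncard = ∑ b ∈ s, (S b).ncard := by
  classical
  induction s using Finset.induction_on with
  | empty => simp
  | insert a s hnm ih =>
    rw [Finset.set_biUnion_insert, Finset.sum_insert hnm]
    have hfin1 : (S a).Finite := hfin a (Finset.mem_insert_self a s)
    have hfin2 : (⋃ b ∈ s, S b).Finite := by
      apply Set.Finite.biUnion (s.finite_toSet)
      intro b hb
      exact hfin b (Finset.mem_insert_of_mem hb)
    have hd : Disjoint (S a) (⋃ b ∈ s, S b) := by
      rw [Set.disjoint_left]
      rintro x hxa hxu
      rw [Set.mem_iUnion₂] at hxu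
      obtain ⟨b, hb, hxb⟩ := hxu
      have hab : a ≠ b := fun hc => hnm (hc ▸ hb)
      exact Set.disjoint_left.mp
        (hdisj a (Finset.mem_insert_self a s) b (Finset.mem_insert_of_mem hb) hab) hxa hxb
    rw [Set.ncard_union_eq hd hfin1 hfin2,
      ih (fun b hb => hfin b (Finset.mem_insert_of_mem hb))
        (fun b hb c hc hbc =>
          hdisj b (Finset.mem_insert_of_mem hb) c (Finset.mem_insert_of_mem hc) hbc)]

end Stmt14Aux

open Stmt14Aux in
/-- For `n ≥ 3` and `0 ≤ k ≤ n - 3`, `f n k (n-1) = 2^(n-3-k)`. -/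
theorem stmt14 (n k : ℕ) (hn : 3 ≤ n) (hk : k + 3 ≤ n) :
    f n k (n - 1) = 2 ^ (n - 3 - k) := by
  classical
  have hTS : {e : Fin n → ℕ | e ∈ InvSeq0012 n ∧ srpt e = k ∧ lastEntry e = n - 1}
      = ⋃ m ∈ Finset.Icc k (n - 3), Sm n k m := by
    apply le_antisymm (TS_sub_union n k hn hk)
    apply Set.iUnion₂_subset
    intro m hm
    obtain ⟨h1, h2⟩ := Finset.mem_Icc.mp hm
    exact Sm_sub_TS n k m hn h1 h2
  have hfin : ∀ m ∈ Finset.Icc k (n - 3), (Sm n k m).Finite := by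
    intro m hm
    obtain ⟨h1, h2⟩ := Finset.mem_Icc.mp hm
    rw [Sm_eq_image n k m hn h1 h2]
    exact (A_finite _ _).image _
  have hdisj : ∀ m ∈ Finset.Icc k (n - 3), ∀ m' ∈ Finset.Icc k (n - 3), m ≠ m' →
      Disjoint (Sm n k m) (Sm n k m') := by
    intro m hm m' hm' hne
    obtain ⟨h1, h2⟩ := Finset.mem_Icc.mp hm
    obtain ⟨h1', h2'⟩ := Finset.mem_Icc.mp hm'
    rcases Nat.lt_or_ge m m' with h | h
    · exact Sm_disjoint n k m m' hn h2 h
    · exact (Sm_disjoint n k m' m hn h2' (by omega)).symm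
  unfold f
  rw [hTS, ncard_biUnion _ _ hfin hdisj]
  have step : ∑ m ∈ Finset.Icc k (n - 3), (Sm n k m).ncard
      = ∑ m ∈ Finset.Icc k (n - 3), (n - 3 - k).choose (n - 3 - m) := by
    apply Finset.sum_congr rfl
    intro m hm
    obtain ⟨h1, h2⟩ := Finset.mem_Icc.mp hm
    rw [Sm_eq_image n k m hn h1 h2, Set.ncard_image_of_injective _ (ext_inj n k m h2 hn),
      A_card]
    congr 1
    omega
  rw [step]
  have hicc : Finset.Icc k (n - 3) = Finset.Icc k (k + (n - 3 - k)) := by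
    congr 1
    omega
  rw [hicc, ← Finset.Ico_add_one_right_eq_Icc, Finset.sum_Ico_eq_sum_range]
  have hlen : k + (n - 3 - k) + 1 - k = (n - 3 - k) + 1 := by omega
  rw [hlen]
  have step2 : ∀ r ∈ Finset.range ((n - 3 - k) + 1),
      (n - 3 - k).choose (n - 3 - (k + r)) = (n - 3 - k).choose ((n - 3 - k) - r) := by
    intro r hr
    congr 1
    omega
  rw [Finset.sum_congr rfl step2]
  have hrefl : ∑ r ∈ Finset.range ((n - 3 - k) + 1), (n - 3 - k).choose ((n - 3 - k) - r)
      = ∑ r ∈ Finset.range ((n - 3 - k) + 1), (n - 3 - k).choose r :=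
    Finset.sum_range_reflect (fun j => (n - 3 - k).choose j) ((n - 3 - k) + 1)
  rw [hrefl, Nat.sum_range_choose]
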